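/- Let α be a prime element of ℤ[ω] whose absolute norm m = Nα is a rational prime with gcd(m, 6) = 1, and let ᾱ denote the complex conjugate of α (so α and ᾱ are nonassociate prime elements of ℤ[ω] coprime to 2 and to √−3 = 1 + 2ω). If α ≡ 1 (mod 4ℤ[ω]) then [α/ᾱ] = [α/√−3], and if α ≡ −1, √−3, or −√−3 (mod 4ℤ[ω]) then [α/ᾱ] = −[α/√−3]. -/

import Mathlib

open scoped NumberTheorySymbols

lemma jac_n3 {n : ℕ} (h3 : ¬ 3 ∣ n) :
    J((n:ℤ) | 3) = (if n % 3 = 1 then 1 else -1) := by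
  have hmod : ((n:ℤ)) % ((3:ℕ):ℤ) = ((n % 3 : ℕ) : ℤ) % ((3:ℕ):ℤ) := by
    push_cast; omega
  rw [jacobiSym.mod_left' hmod]
  have h : n % 3 = 1 ∨ n % 3 = 2 := by omega
  rcases h with h | h
  · simp [h]
  · rw [h]
    rw [show ((2:ℕ):ℤ) = 2 by norm_num, jacobiSym.at_two (by decide : Odd 3)]
    simp [h]

lemma jac_flip3 {n : ℕ} (hn : Odd n) (h3 : ¬ 3 ∣ n) :
    J((3:ℤ) | n) = (if n % 4 = 3 then -1 else 1) * (if n % 3 = 1 then 1 else -1) := by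
  have h2 : n % 2 = 1 := Nat.odd_iff.mp hn
  have hrec := jacobiSym.quadratic_reciprocity_if (a := 3) (b := n) (by norm_num) h2
  have hn3 := jac_n3 h3
  have h34 : ((3:ℕ):ℤ) = (3:ℤ) := by norm_num
  rw [← h34, ← hrec]
  by_cases h4 : n % 4 = 3 <;> by_cases h31 : n % 3 = 1 <;>
    simp [h4, h31, hn3]

/-- `J(m | n) = J(3 | n)` when `n ∣ m − 3c²` and `gcd(c,n) = 1`. -/
lemma jac_m_eq_3 {m n : ℕ} {c : ℤ} (hdvd : (n:ℤ) ∣ (m:ℤ) - 3*c^2)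
    (hcn : c.gcd n = 1) : J((m:ℤ) | n) = J((3:ℤ) | n) := by
  have hmod : ((m:ℤ)) ≡ (3*c^2) [ZMOD (n:ℤ)] := Int.modEq_iff_dvd.mpr
    (by rw [show (3*c^2:ℤ) - m = -((m:ℤ)-3*c^2) by ring]; exact dvd_neg.mpr hdvd)
  rw [jacobiSym.mod_left' hmod]
  rw [jacobiSym.mul_left, jacobiSym.sq_one' hcn, mul_one]

/-- For `m % 4 = 1`: `J(n | m) = χ₄(n)·χ₃(n)` under the standard side conditions. -/
lemma jac_aux1 {m n : ℕ} {c : ℤ} (hm4 : m % 4 = 1) (hn : Odd n)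
    (hdvd : (n:ℤ) ∣ (m:ℤ) - 3*c^2) (hcn : c.gcd n = 1) (h3 : ¬ 3 ∣ n) :
    J((n:ℤ) | m) = (if n % 4 = 3 then -1 else 1) * (if n % 3 = 1 then 1 else -1) := by
  rw [← jacobiSym.quadratic_reciprocity_one_mod_four hm4 hn, jac_m_eq_3 hdvd hcn,
    jac_flip3 hn h3]

/-- For `m % 4 = 3`: `J(n | m) = χ₃(n)` under the standard side conditions. -/
lemma jac_aux3 {m n : ℕ} {c : ℤ} (hm4 : m % 4 = 3) (hn : Odd n)
    (hdvd : (n:ℤ) ∣ (m:ℤ) - 3*c^2) (hcn : c.gcd n = 1) (h3 : ¬ 3 ∣ n) :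
    J((n:ℤ) | m) = (if n % 3 = 1 then 1 else -1) := by
  have h2 : n % 2 = 1 := Nat.odd_iff.mp hn
  have hrec := jacobiSym.quadratic_reciprocity_if (a := n) (b := m) h2 (by omega)
  rw [← hrec, jac_m_eq_3 hdvd hcn, jac_flip3 hn h3]
  by_cases h4 : n % 4 = 3 <;> by_cases h31 : n % 3 = 1 <;> simp [h4, h31, hm4]

/-- If `m` is prime and `g` divides both `x` and `y` with `m = A·x² + B·y²`, then `g = 1`. -/
lemma sq_gcd {m : ℕ} (hmp : m.Prime) {A B x y : ℤ} (hm : (m:ℤ) = A*x^2 + B*y^2)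
    {g : ℕ} (hgx : (g:ℤ) ∣ x) (hgy : (g:ℤ) ∣ y) : g = 1 := by
  obtain ⟨x', rfl⟩ := hgx
  obtain ⟨y', rfl⟩ := hgy
  have hdvd : ((g^2 : ℕ) : ℤ) ∣ (m : ℤ) := ⟨A*x'^2 + B*y'^2, by push_cast; rw [hm]; ring⟩
  have hdvd' : g^2 ∣ m := Int.natCast_dvd_natCast.mp hdvd
  have hg : g ∣ m := dvd_trans (dvd_pow_self g two_ne_zero) hdvd'
  rcases (Nat.Prime.eq_one_or_self_of_dvd hmp g hg) with h | h
  · exact h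
  · subst h
    have := Nat.le_of_dvd hmp.pos hdvd'
    have := hmp.two_le
    nlinarith

/-- Evaluation of `J(r | m)` for odd `r`, `m ≡ 3 mod 4`, `m = A r² + 3c²` prime, `r ≡ t mod 3`. -/
lemma jac_odd_eval3 {m : ℕ} (hmp : m.Prime) {A c r t : ℤ} (hm4 : m % 4 = 3)
    (hm : (m:ℤ) = A * r^2 + 3*c^2) (hr : r % 2 = 1)
    (ht : t = 1 ∨ t = -1) (hrt : (3:ℤ) ∣ r - t) :
    J(r | m) = t := by
  obtain ⟨n, hn⟩ : ∃ n : ℕ, (n:ℤ) = r ∨ (n:ℤ) = -r := by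
    rcases Int.natAbs_eq r with h | h
    · exact ⟨r.natAbs, Or.inl h.symm⟩
    · exact ⟨r.natAbs, Or.inr (by omega)⟩
  have hnr : (n:ℤ) ∣ r := by rcases hn with h | h <;> [exact ⟨1, by omega⟩; exact ⟨-1, by omega⟩]
  have hnodd : Odd n := by rw [Nat.odd_iff]; omega
  have hdvd : (n:ℤ) ∣ (m:ℤ) - 3*c^2 := by
    rw [hm]; exact dvd_trans hnr ⟨A*r, by ring⟩
  have hcn : c.gcd n = 1 :=
    sq_gcd hmp (by rw [hm]; ring : (m:ℤ) = 3*c^2 + A*r^2)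
      (Int.gcd_dvd_left _ _) (dvd_trans (Int.gcd_dvd_right _ _) hnr)
  have h3n : ¬ 3 ∣ n := by
    intro h
    have h3n' : (3:ℤ) ∣ (n:ℤ) := by exact_mod_cast Int.natCast_dvd_natCast.mpr h
    rcases ht with rfl | rfl <;> omega
  have key := jac_aux3 hm4 hnodd hdvd hcn h3n
  have hmodd : Odd m := Nat.odd_iff.mpr (by omega)
  have hχm : ZMod.χ₄ ((m : ℕ) : ZMod 4) = -1 := by
    rw [ZMod.χ₄_nat_eq_if_mod_four, if_neg (by omega), if_neg (by omega)]
  rcases hn with h | h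
  · rw [← h, key]
    rcases ht with rfl | rfl
    · rw [if_pos (by omega)]
    · rw [if_neg (by omega)]
  · rw [show r = -((n:ℤ)) by omega, jacobiSym.neg _ hmodd, key, hχm]
    rcases ht with rfl | rfl
    · rw [if_neg (by omega)]; norm_num
    · rw [if_pos (by omega)]; norm_num

/-- Evaluation of `J(r | m)` for odd `r`, `m ≡ 1 mod 4`, `m = A r² + 3c²` prime, `r ≡ t mod 3`. -/
lemma jac_odd_eval1 {m : ℕ} (hmp : m.Prime) {A c r t : ℤ} (hm4 : m % 4 = 1)
    (hm : (m:ℤ) = A * r^2 + 3*c^2) (hr : r % 2 = 1)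
    (ht : t = 1 ∨ t = -1) (hrt : (3:ℤ) ∣ r - t) :
    J(r | m) = (if r % 4 = 1 then t else -t) := by
  obtain ⟨n, hn⟩ : ∃ n : ℕ, (n:ℤ) = r ∨ (n:ℤ) = -r := by
    rcases Int.natAbs_eq r with h | h
    · exact ⟨r.natAbs, Or.inl h.symm⟩
    · exact ⟨r.natAbs, Or.inr (by omega)⟩
  have hnr : (n:ℤ) ∣ r := by rcases hn with h | h <;> [exact ⟨1, by omega⟩; exact ⟨-1, by omega⟩]
  have hnodd : Odd n := by rw [Nat.odd_iff]; omega
  have hdvd : (n:ℤ) ∣ (m:ℤ) - 3*c^2 := by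
    rw [hm]; exact dvd_trans hnr ⟨A*r, by ring⟩
  have hcn : c.gcd n = 1 :=
    sq_gcd hmp (by rw [hm]; ring : (m:ℤ) = 3*c^2 + A*r^2)
      (Int.gcd_dvd_left _ _) (dvd_trans (Int.gcd_dvd_right _ _) hnr)
  have h3n : ¬ 3 ∣ n := by
    intro h
    have h3n' : (3:ℤ) ∣ (n:ℤ) := by exact_mod_cast Int.natCast_dvd_natCast.mpr h
    rcases ht with rfl | rfl <;> omega
  have key := jac_aux1 hm4 hnodd hdvd hcn h3n
  have hmodd : Odd m := Nat.odd_iff.mpr (by omega)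
  have hχm : ZMod.χ₄ ((m : ℕ) : ZMod 4) = 1 := by
    rw [ZMod.χ₄_nat_eq_if_mod_four, if_neg (by omega), if_pos hm4]
  have hr4 : r % 4 = 1 ∨ r % 4 = 3 := by omega
  rcases hn with h | h
  · rw [← h, key]
    rcases ht with rfl | rfl <;> rcases hr4 with h4 | h4
    · simp [show n % 4 = 1 by omega, show n % 3 = 1 by omega, show ((n:ℤ)) % 4 = 1 by omega]
    · simp [show n % 4 = 3 by omega, show n % 3 = 1 by omega, show ¬ ((n:ℤ)) % 4 = 1 by omega]
    · simp [show n % 4 = 1 by omega, show n % 3 = 2 by omega, show ((n:ℤ)) % 4 = 1 by omega]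
    · simp [show n % 4 = 3 by omega, show n % 3 = 2 by omega, show ¬ ((n:ℤ)) % 4 = 1 by omega]
  · rw [show r = -((n:ℤ)) by omega, jacobiSym.neg _ hmodd, key, hχm, one_mul]
    rcases ht with rfl | rfl <;> rcases hr4 with h4 | h4
    · simp [show n % 4 = 3 by omega, show n % 3 = 2 by omega, show (-(n:ℤ)) % 4 = 1 by omega]
    · simp [show n % 4 = 1 by omega, show n % 3 = 2 by omega, show ¬ (-(n:ℤ)) % 4 = 1 by omega]
    · simp [show n % 4 = 3 by omega, show n % 3 = 1 by omega, show (-(n:ℤ)) % 4 = 1 by omega]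
    · simp [show n % 4 = 1 by omega, show n % 3 = 1 by omega, show ¬ (-(n:ℤ)) % 4 = 1 by omega]

lemma jac_div_four_pow (j : ℕ) (r : ℤ) {b : ℕ} (hb : b % 2 = 1) :
    J(4^j * r | b) = J(r | b) := by
  induction j with
  | zero => norm_num
  | succ j ih =>
    rw [show (4:ℤ)^(j+1) * r = 4 * (4^j * r) by ring,
      ← jacobiSym.div_four_left (Int.mul_emod_right 4 _) hb,
      Int.mul_ediv_cancel_left _ (by norm_num : (4:ℤ) ≠ 0), ih]

lemma exists_decomp : ∀ (N : ℕ) (T : ℤ), T.natAbs ≤ N → T ≠ 0 →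
    ∃ j : ℕ, ∃ r : ℤ, T = 4^j * r ∧ ¬ (4:ℤ) ∣ r := by
  intro N
  induction N with
  | zero => intro T h h0; exact absurd (by omega : T = 0) h0
  | succ N ih =>
    intro T hT h0
    by_cases h4 : (4:ℤ) ∣ T
    · obtain ⟨T', rfl⟩ := h4
      have hT'0 : T' ≠ 0 := by rintro rfl; simp at h0
      have hle : T'.natAbs ≤ N := by
        have : (4*T').natAbs = 4 * T'.natAbs := by
          rw [Int.natAbs_mul]; rfl
        omega
      obtain ⟨j, r, hr, h4r⟩ := ih T' hle hT'0
      exact ⟨j+1, r, by rw [hr]; ring, h4r⟩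
    · exact ⟨0, T, by norm_num, h4⟩


/-- Core computation, case `u` odd, `c` even. -/
lemma coreA {m : ℕ} (hmp : m.Prime) {u c t : ℤ}
    (hm : (m:ℤ) = u^2 + 3*c^2) (hu : u % 2 = 1) (hc : c % 2 = 0)
    (ht : t = 1 ∨ t = -1) (hut : (3:ℤ) ∣ u - t) :
    J(2*u | m) = (if (u + c) % 4 = 1 then t else -t) := by
  obtain ⟨k, hk⟩ : ∃ k, u = 2*k+1 := ⟨u/2, by omega⟩
  obtain ⟨w, hw⟩ : ∃ w : ℤ, u^2 = 8*w+1 := by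
    obtain ⟨v, hv⟩ := Int.even_mul_succ_self k
    exact ⟨v, by rw [hk]; nlinarith [hv]⟩
  obtain ⟨l, hl⟩ : ∃ l, c = 2*l := ⟨c/2, by omega⟩
  have key : ∀ hm4 : m % 4 = 1, J(u|m) = (if u % 4 = 1 then t else -t) := fun hm4 =>
    jac_odd_eval1 hmp hm4 (by rw [hm]; ring : (m:ℤ) = 1*u^2+3*c^2) hu ht hut
  have hsplit : J(2*u|m) = J(2|m) * J(u|m) := jacobiSym.mul_left 2 u m
  rcases (by omega : l % 2 = 0 ∨ l % 2 = 1) with hl2 | hl2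
  · -- c ≡ 0 mod 4, m ≡ 1 mod 8
    obtain ⟨l', hl'⟩ : ∃ l', l = 2*l' := ⟨l/2, by omega⟩
    obtain ⟨Q, hQ⟩ : ∃ Q : ℤ, (m:ℤ) = 8*Q + 1 :=
      ⟨w + 6*l'^2, by rw [hm, hw, hl, hl']; ring⟩
    have hmodd : Odd m := Nat.odd_iff.mpr (by omega)
    have hχ : ZMod.χ₈ ((m:ℕ) : ZMod 8) = 1 := by
      rw [ZMod.χ₈_nat_eq_if_mod_eight, if_neg (by omega), if_pos (by omega)]
    rw [hsplit, jacobiSym.at_two hmodd, hχ, one_mul, key (by omega)]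
    rcases (by omega : u % 4 = 1 ∨ u % 4 = 3) with h4 | h4
    · rw [if_pos h4, if_pos (by omega)]
    · rw [if_neg (by omega), if_neg (by omega)]
  · -- c ≡ 2 mod 4, m ≡ 5 mod 8
    obtain ⟨l', hl'⟩ : ∃ l', l = 2*l'+1 := ⟨l/2, by omega⟩
    obtain ⟨Q, hQ⟩ : ∃ Q : ℤ, (m:ℤ) = 8*Q + 5 :=
      ⟨w + 6*l'^2 + 6*l' + 1, by rw [hm, hw, hl, hl']; ring⟩
    have hmodd : Odd m := Nat.odd_iff.mpr (by omega)
    have hχ : ZMod.χ₈ ((m:ℕ) : ZMod 8) = -1 := by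
      rw [ZMod.χ₈_nat_eq_if_mod_eight, if_neg (by omega), if_neg (by omega)]
    rw [hsplit, jacobiSym.at_two hmodd, hχ, key (by omega)]
    rcases (by omega : u % 4 = 1 ∨ u % 4 = 3) with h4 | h4
    · rw [if_pos h4, if_neg (by omega)]; ring
    · rw [if_neg (by omega), if_pos (by omega)]; ring

/-- Core computation, case `u` even, `c` odd: then always `J(2u|m) = -t`. -/
lemma coreB {m : ℕ} (hmp : m.Prime) {u c t : ℤ}
    (hm : (m:ℤ) = u^2 + 3*c^2) (hu : u % 2 = 0) (hc : c % 2 = 1)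
    (ht : t = 1 ∨ t = -1) (hut : (3:ℤ) ∣ u - t) :
    J(2*u | m) = -t := by
  obtain ⟨v, hv⟩ : ∃ v : ℤ, c^2 = 8*v+1 := by
    obtain ⟨k, hk⟩ : ∃ k, c = 2*k+1 := ⟨c/2, by omega⟩
    obtain ⟨w, hw⟩ := Int.even_mul_succ_self k
    exact ⟨w, by rw [hk]; nlinarith [hw]⟩
  obtain ⟨u1, hu1⟩ : ∃ u1, u = 2*u1 := ⟨u/2, by omega⟩
  obtain ⟨Q4, hQ4⟩ : ∃ Q : ℤ, (m:ℤ) = 4*Q + 24*v + 3 :=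
    ⟨u1^2, by rw [hm, hu1, hv]; ring⟩
  have hm4 : m % 4 = 3 := by omega
  have hm2 : m % 2 = 1 := by omega
  have hmodd : Odd m := Nat.odd_iff.mpr hm2
  obtain ⟨j, r, hjr, h4r⟩ := exists_decomp (2*u).natAbs (2*u) le_rfl
    (by rcases ht with rfl | rfl <;> omega)
  have hj : j ≠ 0 := by rintro rfl; simp only [pow_zero, one_mul] at hjr; omega
  obtain ⟨i, rfl⟩ := Nat.exists_eq_succ_of_ne_zero hj
  have hu2 : u = 2*(4^i)*r := by
    have h2 : (2:ℤ)*u = 2*(2*(4^i)*r) := by rw [hjr, pow_succ]; ring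
    exact mul_left_cancel₀ two_ne_zero h2
  have h43 : (3:ℤ) ∣ 4^i - 1 := by
    have h := (Int.ModEq.pow i (by decide : (4:ℤ) ≡ 1 [ZMOD 3])).dvd
    rw [one_pow] at h; omega
  have hur : (3:ℤ) ∣ u - 2*r := by
    have he : u - 2*r = (2*r)*(4^i - 1) := by rw [hu2]; ring
    rw [he]; exact Dvd.dvd.mul_left h43 (2*r)
  rw [hjr, jac_div_four_pow _ _ hm2]
  rcases (by omega : r % 2 = 1 ∨ r % 2 = 0) with hrodd | hreven
  · -- r odd
    have hmA : (m:ℤ) = 4^(2*i+1)*r^2 + 3*c^2 := by rw [hm, hu2]; ring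
    have hrt : (3:ℤ) ∣ r - (-t) := by omega
    exact jac_odd_eval3 hmp hm4 hmA hrodd
      (by rcases ht with rfl | rfl <;> norm_num) hrt
  · -- r = 2e with e odd
    obtain ⟨e, rfl⟩ : ∃ e, r = 2*e := ⟨r/2, by omega⟩
    have he : e % 2 = 1 := by omega
    obtain ⟨Q, hQ⟩ : ∃ Q : ℤ, (m:ℤ) = 16*Q + 24*v + 3 :=
      ⟨(4^i)^2*e^2, by rw [hm, hu2, hv]; ring⟩
    have hm8 : m % 8 = 3 := by omega
    have hχ : ZMod.χ₈ ((m:ℕ) : ZMod 8) = -1 := by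
      rw [ZMod.χ₈_nat_eq_if_mod_eight, if_neg (by omega), if_neg (by omega)]
    have hmA : (m:ℤ) = 4^(2*i+2)*e^2 + 3*c^2 := by rw [hm, hu2]; ring
    have h43' : (3:ℤ) ∣ 4*4^i - 1 := by omega
    have hue : (3:ℤ) ∣ u - e := by
      have heq : u - e = e*(4*4^i - 1) := by rw [hu2]; ring
      rw [heq]; exact Dvd.dvd.mul_left h43' e
    have het : (3:ℤ) ∣ e - t := by omega
    rw [jacobiSym.mul_left 2 e m, jacobiSym.at_two hmodd, hχ,
      jac_odd_eval3 hmp hm4 hmA he ht het]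
    ring


noncomputable section

/-- `ω = (−1+√−3)/2 ∈ ℂ`. -/
def ω : ℂ := (-1 + Complex.I * Real.sqrt 3) / 2

/-- The ring `ℤ[ω]` of Eisenstein integers, as a subalgebra of `ℂ`. -/
def Zω : Subalgebra ℤ ℂ := Algebra.adjoin ℤ {ω}

/-- `ω` as an element of `ℤ[ω]`. -/
def ωZ : Zω := ⟨ω, Algebra.subset_adjoin (Set.mem_singleton ω)⟩

/-- `√−3 = 1 + 2ω` as an element of `ℤ[ω]`. -/
def sqrtm3 : Zω := 1 + 2 * ωZ

lemma omega_sq : ω^2 = -1 - ω := by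
  have hX : (Complex.I * (Real.sqrt 3 : ℝ))^2 = -3 := by
    rw [mul_pow, Complex.I_sq, ← Complex.ofReal_pow, Real.sq_sqrt (by norm_num : (0:ℝ) ≤ 3)]
    norm_num
  unfold ω
  linear_combination hX/4

lemma omega_im : ω.im = Real.sqrt 3 / 2 := by
  simp [ω, Complex.div_im, Complex.add_im, Complex.mul_im]

lemma omega_re : ω.re = -(1/2) := by
  simp [ω, Complex.div_re, Complex.add_re, Complex.mul_re]
  norm_num

lemma conj_omega : (starRingEnd ℂ) ω = -1 - ω := by
  unfold ω
  rw [map_div₀, map_add, map_mul, Complex.conj_I, map_neg, map_one, Complex.conj_ofReal,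
    map_ofNat]
  ring

lemma lin_indep {a b : ℤ} (h : (a:ℂ) + (b:ℂ) * ω = 0) : a = 0 ∧ b = 0 := by
  have hs : Real.sqrt 3 ≠ 0 := by positivity
  have him : ((a:ℂ) + (b:ℂ) * ω).im = 0 := by rw [h]; simp
  have hre : ((a:ℂ) + (b:ℂ) * ω).re = 0 := by rw [h]; simp
  have him' : (b:ℝ) * (Real.sqrt 3 / 2) = 0 := by
    simpa [Complex.add_im, Complex.mul_im, omega_im, omega_re] using him
  have hb : (b:ℝ) = 0 := by
    rcases mul_eq_zero.mp him' with h' | h'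
    · exact h'
    · exact absurd h' (by positivity)
  have hb' : b = 0 := by exact_mod_cast hb
  subst hb'
  have hre' : (a:ℝ) = 0 := by
    simpa [Complex.add_re, Complex.mul_re, omega_im, omega_re] using hre
  exact ⟨by exact_mod_cast hre', rfl⟩

lemma repr_uniq {a b a' b' : ℤ} (h : (a:ℂ) + (b:ℂ) * ω = (a':ℂ) + (b':ℂ) * ω) :
    a = a' ∧ b = b' := by
  have h0 : ((a - a' : ℤ):ℂ) + ((b - b' : ℤ):ℂ) * ω = 0 := by push_cast; linear_combination h
  obtain ⟨h1, h2⟩ := lin_indep h0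
  omega

lemma Zω_repr {z : ℂ} (hz : z ∈ Zω) : ∃ a b : ℤ, z = (a:ℂ) + (b:ℂ) * ω := by
  induction hz using Algebra.adjoin_induction with
  | mem x hx =>
    rw [Set.mem_singleton_iff] at hx
    exact ⟨0, 1, by rw [hx]; push_cast; ring⟩
  | algebraMap r => exact ⟨r, 0, by push_cast; simp [Algebra.algebraMap_eq_smul_one]⟩
  | add x y hx hy ihx ihy =>
    obtain ⟨a, b, rfl⟩ := ihx
    obtain ⟨c, d, rfl⟩ := ihy
    exact ⟨a + c, b + d, by push_cast; ring⟩
  | mul x y hx hy ihx ihy =>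
    obtain ⟨a, b, rfl⟩ := ihx
    obtain ⟨c, d, rfl⟩ := ihy
    exact ⟨a*c - b*d, a*d + b*c - b*d, by push_cast; linear_combination ((b:ℂ)*d) * omega_sq⟩

lemma conj_mem {z : ℂ} (hz : z ∈ Zω) : (starRingEnd ℂ) z ∈ Zω := by
  obtain ⟨a, b, rfl⟩ := Zω_repr hz
  have : (starRingEnd ℂ) ((a:ℂ) + (b:ℂ) * ω) = ((a - b : ℤ):ℂ) + ((-b : ℤ):ℂ) * ω := by
    rw [map_add, map_mul, conj_omega, map_intCast, map_intCast]
    push_cast; ring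
  rw [this]
  exact add_mem (Subalgebra.intCast_mem _ _)
    (mul_mem (Subalgebra.intCast_mem _ _) ωZ.2)


lemma Zω_coe_four : (((4 : Zω)) : ℂ) = 4 := by norm_cast

/-- If `γ·conj γ = M` with `M` a rational prime and `γ ∣ k` in `ℤ[ω]` for an integer `k`,
then `M ∣ k` in `ℤ`. -/
lemma norm_dvd_int {γ : Zω} {M : ℕ} (hMp : M.Prime)
    (hγ : ((M:ℕ):ℂ) = (γ:ℂ) * (starRingEnd ℂ) (γ:ℂ)) {k : ℤ}
    (h : γ ∣ ((k : ℤ) : Zω)) : (M:ℤ) ∣ k := by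
  obtain ⟨ε, hε⟩ := h
  have hε' : (k:ℂ) = (γ:ℂ) * (ε:ℂ) := by
    have h0 := congrArg Subtype.val hε
    push_cast at h0
    exact h0
  have hconj : (k:ℂ) = (starRingEnd ℂ) (γ:ℂ) * (starRingEnd ℂ) (ε:ℂ) := by
    have := congrArg (starRingEnd ℂ) hε'
    rwa [map_mul, map_intCast] at this
  have hprod : ((k^2 : ℤ):ℂ) = ((M:ℕ):ℂ) * ((ε:ℂ) * (starRingEnd ℂ) (ε:ℂ)) := by
    have hsq : ((k:ℂ))^2 = ((γ:ℂ)*(ε:ℂ)) * ((starRingEnd ℂ) (γ:ℂ) * (starRingEnd ℂ) (ε:ℂ)) := by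
      rw [← hε', ← hconj]; ring
    push_cast
    rw [hsq, hγ]
    ring
  obtain ⟨p, q, hpq⟩ := Zω_repr (mul_mem ε.2 (conj_mem ε.2))
  have hkey : ((k^2:ℤ):ℂ) + ((0:ℤ):ℂ) * ω = ((M*p : ℤ):ℂ) + ((M*q:ℤ):ℂ)*ω := by
    rw [hprod, hpq]
    push_cast
    ring
  obtain ⟨h1, h2⟩ := repr_uniq hkey
  have hdvd : (M:ℤ) ∣ k^2 := ⟨p, h1⟩
  exact (Nat.prime_iff_prime_int.mp hMp).dvd_of_dvd_pow hdvd

/-- Forward direction of divisibility by 4 in coordinates. -/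
lemma dvd4 {γ : Zω} {x y : ℤ} (hγ : (γ:ℂ) = (x:ℂ) + (y:ℂ)*ω) (h : (4:Zω) ∣ γ) :
    4 ∣ x ∧ 4 ∣ y := by
  obtain ⟨ε, hε⟩ := h
  obtain ⟨p, q, hpq⟩ := Zω_repr ε.2
  have h0 := congrArg Subtype.val hε
  push_cast at h0
  rw [hγ, hpq, Zω_coe_four] at h0
  have hkey : (x:ℂ) + (y:ℂ)*ω = ((4*p : ℤ):ℂ) + ((4*q:ℤ):ℂ)*ω := by
    rw [h0]; push_cast; ring
  obtain ⟨h1, h2⟩ := repr_uniq hkey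
  exact ⟨⟨p, h1⟩, ⟨q, h2⟩⟩


/-- Let `α` be a prime of `ℤ[ω]` whose absolute norm `m = α·conj α` is a rational prime
coprime to `6`, and let `ᾱ` be its complex conjugate.  If `α ≡ 1 (mod 4ℤ[ω])` then
`[α/ᾱ] = [α/√−3]`, and if `α ≡ −1, √−3, −√−3 (mod 4ℤ[ω])` then `[α/ᾱ] = −[α/√−3]`.
The symbol `[α/π]` is encoded as the element of `{1, −1}` congruent to
`α^{(Nπ−1)/2} (mod π)`; here `Nᾱ = m` and `N(√−3) = 3`. -/
theorem stmt11 (α : Zω) (hαp : Prime α)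
    (m : ℕ) (hm : ((m : ℂ)) = (α : ℂ) * (starRingEnd ℂ) (α : ℂ))
    (hmp : Nat.Prime m) (hm6 : Nat.Coprime m 6)
    (αbar : Zω) (hαbar : (αbar : ℂ) = (starRingEnd ℂ) (α : ℂ))
    (s t : ℤ) (hs : s = 1 ∨ s = -1) (ht : t = 1 ∨ t = -1)
    (hsd : αbar ∣ α ^ ((m - 1) / 2) - (s : Zω))
    (htd : sqrtm3 ∣ α ^ (((3 : ℕ) - 1) / 2) - (t : Zω)) :
    ((4 : Zω) ∣ α - 1 → s = t) ∧
    (((4 : Zω) ∣ α + 1 ∨ (4 : Zω) ∣ α - sqrtm3 ∨ (4 : Zω) ∣ α + sqrtm3) → s = -t) := by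
  obtain ⟨a, b, hab⟩ := Zω_repr α.2
  have hconjα : (starRingEnd ℂ) (α:ℂ) = ((a-b:ℤ):ℂ) + ((-b:ℤ):ℂ)*ω := by
    rw [hab, map_add, map_mul, conj_omega, map_intCast, map_intCast]; push_cast; ring
  have hmint : (m:ℤ) = a^2 - a*b + b^2 := by
    have h0 : ((m:ℕ):ℂ) = ((a^2 - a*b + b^2 : ℤ):ℂ) := by
      rw [hm, hconjα, hab]; push_cast; linear_combination (-(b:ℂ)^2) * omega_sq
    exact_mod_cast h0
  have hm2 : ¬ 2 ∣ m := by
    intro h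
    have := Nat.Coprime.eq_one_of_dvd ((hm6.coprime_dvd_right (by norm_num : (2:ℕ) ∣ 6)).symm) h
    omega
  have hm3 : ¬ 3 ∣ m := by
    intro h
    have := Nat.Coprime.eq_one_of_dvd ((hm6.coprime_dvd_right (by norm_num : (3:ℕ) ∣ 6)).symm) h
    omega
  have hm5 : 5 ≤ m := by have := hmp.two_le; omega
  obtain ⟨T, hT⟩ : ∃ T : ℤ, T = 2*a - b := ⟨2*a - b, rfl⟩
  have hωZ : ((ωZ : Zω):ℂ) = ω := rfl
  have hαsubT : α - ((T:ℤ):Zω) = -αbar := by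
    apply Subtype.ext
    push_cast
    rw [hT, hab, hαbar, hconjα]
    push_cast
    ring
  have hdvdT : αbar ∣ α - ((T:ℤ):Zω) := ⟨-1, by rw [hαsubT]; ring⟩
  have hTs : αbar ∣ ((T^((m-1)/2) - s : ℤ):Zω) := by
    have h1 : αbar ∣ α^((m-1)/2) - ((T:ℤ):Zω)^((m-1)/2) :=
      dvd_trans hdvdT (sub_dvd_pow_sub_pow α ((T:ℤ):Zω) ((m-1)/2))
    have h2 : ((T^((m-1)/2) - s : ℤ):Zω) =
        (α^((m-1)/2) - (s:Zω)) - (α^((m-1)/2) - ((T:ℤ):Zω)^((m-1)/2)) := by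
      push_cast; ring
    rw [h2]; exact dvd_sub hsd h1
  have hMαbar : ((m:ℕ):ℂ) = (αbar:ℂ) * (starRingEnd ℂ) (αbar:ℂ) := by
    rw [hαbar, Complex.conj_conj, hm]; ring
  have hmdvdTs : (m:ℤ) ∣ T^((m-1)/2) - s := norm_dvd_int hmp hMαbar hTs
  have hprime := Nat.prime_iff_prime_int.mp hmp
  have hmT : ¬ (m:ℤ) ∣ T := by
    intro hdvd
    have h4mT : (4*(m:ℤ) - T^2) = 3*b^2 := by rw [hT, hmint]; ring
    have h3b : (m:ℤ) ∣ 3*b^2 := by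
      rw [← h4mT]
      exact dvd_sub (Dvd.dvd.mul_left dvd_rfl 4) (dvd_pow hdvd two_ne_zero)
    have hm3' : ¬ (m:ℤ) ∣ 3 := fun h => by have := Int.le_of_dvd (by norm_num) h; omega
    have hmb : (m:ℤ) ∣ b := by
      rcases hprime.dvd_mul.mp h3b with h | h
      · exact absurd h hm3'
      · exact hprime.dvd_of_dvd_pow h
    have hma : (m:ℤ) ∣ a := by
      have h2a : (m:ℤ) ∣ 2*a := by
        have he : (2*a : ℤ) = T + b := by rw [hT]; ring
        rw [he]; exact dvd_add hdvd hmb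
      rcases hprime.dvd_mul.mp h2a with h | h
      · exact absurd h (fun hh => by have := Int.le_of_dvd (by norm_num) hh; omega)
      · exact h
    obtain ⟨a', rfl⟩ := hma
    obtain ⟨b', rfl⟩ := hmb
    have hmne : (m:ℤ) ≠ 0 := by omega
    have h1 : (1:ℤ) = (m:ℤ)*(a'^2 - a'*b' + b'^2) := by
      apply mul_left_cancel₀ hmne
      rw [mul_one]
      linear_combination hmint
    have : (m:ℤ) ∣ 1 := Dvd.intro _ h1.symm
    have := Int.le_of_dvd one_pos this
    omega
  haveI : Fact m.Prime := ⟨hmp⟩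
  have hTn0 : ((T:ℤ) : ZMod m) ≠ 0 := fun h => hmT ((ZMod.intCast_zmod_eq_zero_iff_dvd T m).mp h)
  have hcast : ((T^((m-1)/2) - s : ℤ) : ZMod m) = 0 :=
    (ZMod.intCast_zmod_eq_zero_iff_dvd _ m).mpr hmdvdTs
  push_cast at hcast
  have hcast' : ((T:ℤ) : ZMod m)^((m-1)/2) = ((s:ℤ) : ZMod m) := by
    linear_combination hcast
  have hNs : ((m:ℕ)-1)/2 = m / 2 := by omega
  have hLs : ((legendreSym m T : ℤ) : ZMod m) = ((s:ℤ) : ZMod m) := by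
    rw [legendreSym.eq_pow, ← hNs, hcast']
  have hL : legendreSym m T = 1 ∨ legendreSym m T = -1 :=
    legendreSym.eq_one_or_neg_one (p := m) hTn0
  have hsL : s = legendreSym m T := by
    have hmodeq : (m:ℤ) ∣ s - legendreSym m T :=
      Int.ModEq.dvd ((ZMod.intCast_eq_intCast_iff _ _ _).mp hLs)
    rcases hL with h | h <;> rcases hs with hs' | hs' <;> rw [h, hs'] at hmodeq ⊢
    all_goals try rfl
    all_goals exfalso
    all_goals norm_num at hmodeq
    all_goals (have := Int.le_of_dvd (by norm_num) hmodeq; omega)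
  have hsJ : s = J(T | m) := by rw [hsL, jacobiSym.legendreSym.to_jacobiSym]
  -- t side
  rw [show (((3:ℕ) - 1)/2) = 1 by norm_num, pow_one] at htd
  have hsq3coe : ((sqrtm3 : Zω):ℂ) = 1 + 2*ω := by
    show ((1 + 2 * ωZ : Zω) : ℂ) = 1 + 2*ω
    push_cast [hωZ]
    rw [show (((2:Zω)):ℂ) = 2 by norm_cast]
  have hω1 : sqrtm3 ∣ (ωZ - 1) := ⟨1 + ωZ, by
    apply Subtype.ext
    push_cast [hωZ, hsq3coe]
    linear_combination (-2:ℂ) * omega_sq⟩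
  have htd2 : sqrtm3 ∣ ((a + b - t : ℤ) : Zω) := by
    have heq : ((a + b - t : ℤ) : Zω) = (α - ((t:ℤ):Zω)) - ((b:ℤ):Zω)*(ωZ - 1) := by
      apply Subtype.ext
      push_cast [hωZ]
      rw [hab]
      push_cast
      ring
    rw [heq]
    exact dvd_sub htd (Dvd.dvd.mul_left hω1 _)
  have hM3 : ((3:ℕ):ℂ) = (sqrtm3:ℂ) * (starRingEnd ℂ) (sqrtm3:ℂ) := by
    rw [hsq3coe, map_add, map_mul, conj_omega, map_one, map_ofNat]
    push_cast
    linear_combination (4:ℂ)*omega_sq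
  have h3ab : (3:ℤ) ∣ a + b - t := norm_dvd_int (by norm_num : Nat.Prime 3) hM3 htd2
  -- final case analysis
  have finishB : b % 4 = 2 → a % 2 = 1 → s = -t := by
    intro hb2 ha1
    obtain ⟨c, hc⟩ : ∃ c, b = 2*c := ⟨b/2, by omega⟩
    have hmuc : (m:ℤ) = (a-c)^2 + 3*c^2 := by rw [hmint, hc]; ring
    have hres := coreB hmp hmuc (by omega) (by omega) ht (by omega)
    rw [show (2*(a-c):ℤ) = T by omega] at hres
    rw [hsJ, hres]
  constructor
  · intro h4
    have hco : ((α - 1 : Zω) : ℂ) = ((a-1 : ℤ):ℂ) + ((b:ℤ):ℂ)*ω := by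
      push_cast; rw [hab]; push_cast; ring
    obtain ⟨ha4, hb4⟩ := dvd4 hco h4
    obtain ⟨c, hc⟩ : ∃ c, b = 2*c := ⟨b/2, by omega⟩
    have hmuc : (m:ℤ) = (a-c)^2 + 3*c^2 := by rw [hmint, hc]; ring
    have hres := coreA hmp hmuc (by omega) (by omega) ht (by omega)
    rw [show (2*(a-c):ℤ) = T by omega, if_pos (by omega : (a - c + c) % 4 = 1)] at hres
    rw [hsJ, hres]
  · intro hcase
    rcases hcase with h4 | h4 | h4
    · have hco : ((α + 1 : Zω) : ℂ) = ((a+1 : ℤ):ℂ) + ((b:ℤ):ℂ)*ω := by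
        push_cast; rw [hab]; push_cast; ring
      obtain ⟨ha4, hb4⟩ := dvd4 hco h4
      obtain ⟨c, hc⟩ : ∃ c, b = 2*c := ⟨b/2, by omega⟩
      have hmuc : (m:ℤ) = (a-c)^2 + 3*c^2 := by rw [hmint, hc]; ring
      have hres := coreA hmp hmuc (by omega) (by omega) ht (by omega)
      rw [show (2*(a-c):ℤ) = T by omega, if_neg (by omega : ¬ (a - c + c) % 4 = 1)] at hres
      rw [hsJ, hres]
    · have hco : ((α - sqrtm3 : Zω) : ℂ) = ((a-1 : ℤ):ℂ) + ((b-2:ℤ):ℂ)*ω := by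
        push_cast [hsq3coe]; rw [hab]; push_cast; ring
      obtain ⟨ha4, hb4⟩ := dvd4 hco h4
      exact finishB (by omega) (by omega)
    · have hco : ((α + sqrtm3 : Zω) : ℂ) = ((a+1 : ℤ):ℂ) + ((b+2:ℤ):ℂ)*ω := by
        push_cast [hsq3coe]; rw [hab]; push_cast; ring
      obtain ⟨ha4, hb4⟩ := dvd4 hco h4
      exact finishB (by omega) (by omega)

end
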